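/- Let X be the n×n lower triangular ones matrix and let γ select columns at positions 1 = t_1 < t_2 < … < t_K ≤ n, giving the n×K matrix X_γ. Then the K×K Gram matrix X_γ' X_γ has entries (X_γ' X_γ)_{kl} = n + 1 − max(t_k, t_l), and its determinant equals ∏_{k=1}^{K} (t_{k+1} − t_k) with the convention t_{K+1} = n + 1. In particular X_γ' X_γ is invertible. -/

import Mathlib

open Matrix Finset

/-- For columns t_1 < … < t_K (t_1 = 1) of the lower triangular ones matrix,
the Gram matrix X_γ'X_γ has entries n+1−max(t_k,t_l) (in 1-based indexing),
determinant ∏ (t_{k+1} − t_k) with t_{K+1} = n+1, and is invertible. -/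
theorem stmt_3 (n K : ℕ) (hn : 0 < n) (hK : 0 < K)
    (t : Fin K → Fin n) (hmono : StrictMono t) (ht1 : t ⟨0, hK⟩ = ⟨0, hn⟩)
    (Xγ : Matrix (Fin n) (Fin K) ℝ)
    (hXγ : ∀ i k, Xγ i k = if t k ≤ i then 1 else 0) :
    (∀ k l, (Xγᵀ * Xγ) k l = ((n - max ((t k) : ℕ) ((t l) : ℕ) : ℕ) : ℝ)) ∧
    (Xγᵀ * Xγ).det =
      ((∏ k : Fin K,
        ((if h : (k : ℕ) + 1 < K then ((t ⟨(k : ℕ) + 1, h⟩ : Fin n) : ℕ) else n)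
          - ((t k) : ℕ)) : ℕ) : ℝ) ∧
    IsUnit (Xγᵀ * Xγ) := by
  classical
  -- the step function
  set u : ℕ → ℕ := fun j => if h : j < K then (t ⟨j, h⟩ : ℕ) else n with hu
  have hu_lt : ∀ j (h : j < K), u j = (t ⟨j, h⟩ : ℕ) := by
    intro j h; simp [hu, h]
  have hu_ge : ∀ j, K ≤ j → u j = n := by
    intro j h; simp [hu, Nat.not_lt.mpr h]
  have humono : Monotone u := by
    apply monotone_nat_of_le_succ
    intro j
    by_cases h1 : j + 1 < K
    · have h0 : j < K := Nat.lt_of_succ_lt h1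
      rw [hu_lt j h0, hu_lt (j+1) h1]
      exact le_of_lt (hmono (by simp))
    · by_cases h0 : j < K
      · rw [hu_lt j h0, hu_ge (j+1) (Nat.not_lt.mp h1)]
        exact le_of_lt (t ⟨j, h0⟩).isLt
      · rw [hu_ge j (Nat.not_lt.mp h0), hu_ge (j+1) (Nat.not_lt.mp h1)]
  -- the gaps
  set g : Fin K → ℕ := fun k =>
    (if h : (k : ℕ) + 1 < K then ((t ⟨(k : ℕ) + 1, h⟩ : Fin n) : ℕ) else n) - ((t k) : ℕ)
    with hgdef
  have hg : ∀ k : Fin K, g k = u ((k : ℕ) + 1) - u (k : ℕ) := by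
    intro k
    have h0 : u (k : ℕ) = (t k : ℕ) := by rw [hu_lt _ k.isLt]
    show (if h : (k : ℕ) + 1 < K then ((t ⟨(k : ℕ) + 1, h⟩ : Fin n) : ℕ) else n)
        - ((t k) : ℕ) = _
    by_cases h : (k : ℕ) + 1 < K
    · simp only [h, dif_pos]
      rw [hu_lt _ h, h0]
    · simp only [h, dif_neg, not_false_iff]
      rw [hu_ge _ (Nat.not_lt.mp h), h0]
  have hgpos : ∀ k : Fin K, 0 < g k := by
    intro k
    rw [hg k, hu_lt _ k.isLt]
    simp only [Fin.eta]
    by_cases h : (k : ℕ) + 1 < K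
    · rw [hu_lt _ h]
      have h2 : ((t k) : ℕ) < ((t ⟨(k : ℕ) + 1, h⟩) : ℕ) :=
        Fin.lt_def.mp (hmono (show k < ⟨(k : ℕ) + 1, h⟩ by simp [Fin.lt_def]))
      omega
    · rw [hu_ge _ (Nat.not_lt.mp h)]
      have := (t k).isLt
      omega
  -- telescoping sum
  have htel : ∀ m : Fin K, ∑ j ∈ Finset.Ici m, g j = n - (t m : ℕ) := by
    intro m
    have key : ∑ j ∈ Finset.Ico (m : ℕ) K, (u (j + 1) - u j) = n - (t m : ℕ) := by
      rw [Finset.sum_Ico_eq_sum_range]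
      simp_rw [show ∀ i, (m : ℕ) + i + 1 = (m : ℕ) + (i + 1) from fun i => by omega]
      rw [Finset.sum_range_tsub (f := fun i => u ((m : ℕ) + i))
        (fun a b hab => humono (by omega))]
      rw [show (m : ℕ) + (K - (m : ℕ)) = K from by have := m.isLt; omega,
        hu_ge K le_rfl, Nat.add_zero, hu_lt _ m.isLt]
    rw [← key]
    have hIcc : Finset.Ico (m : ℕ) K = Finset.Icc (m : ℕ) (K - 1) := by
      rw [← Finset.Ico_add_one_right_eq_Icc]; congr 1; omega
    rw [← Fin.map_valEmbedding_Ici, Finset.sum_map]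
    apply Finset.sum_congr rfl
    intro j _
    rw [hg j]
    rfl
  -- the entries of the Gram matrix
  have hvalmax : ∀ k l : Fin K, ((max (t k) (t l) : Fin n) : ℕ)
      = max ((t k) : ℕ) ((t l) : ℕ) :=
    fun k l => (show Monotone (Fin.val : Fin n → ℕ) from fun _ _ h => h).map_max
  have hentry : ∀ k l, (Xγᵀ * Xγ) k l
      = ((n - max ((t k) : ℕ) ((t l) : ℕ) : ℕ) : ℝ) := by
    intro k l
    rw [Matrix.mul_apply]
    have h2 : ∀ i : Fin n, Xγᵀ k i * Xγ i l
        = if max (t k) (t l) ≤ i then (1 : ℝ) else 0 := by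
      intro i
      rw [Matrix.transpose_apply, hXγ, hXγ]
      by_cases h1 : t k ≤ i <;> by_cases h2 : t l ≤ i <;>
        simp [h1, h2, max_le_iff]
    simp_rw [h2]
    rw [Finset.sum_boole]
    have : Finset.univ.filter (fun i => max (t k) (t l) ≤ i)
        = Finset.Ici (max (t k) (t l)) := by
      ext i; simp
    rw [this, Fin.card_Ici, hvalmax]
  -- factorization M = E * D * Eᵀ
  set E : Matrix (Fin K) (Fin K) ℝ := fun k j => if k ≤ j then 1 else 0 with hE
  set D : Matrix (Fin K) (Fin K) ℝ := Matrix.diagonal (fun j => (g j : ℝ)) with hD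
  have hfact : Xγᵀ * Xγ = E * D * Eᵀ := by
    ext k l
    rw [hentry k l, Matrix.mul_apply]
    have h3 : ∀ j : Fin K, (E * D) k j * Eᵀ j l
        = if max k l ≤ j then (g j : ℝ) else 0 := by
      intro j
      rw [Matrix.mul_diagonal, Matrix.transpose_apply, hE]
      by_cases h1 : k ≤ j <;> by_cases h2 : l ≤ j <;>
        simp [h1, h2, max_le_iff]
    simp_rw [h3]
    rw [Finset.sum_ite, Finset.sum_const_zero, add_zero]
    have : Finset.univ.filter (fun j => max k l ≤ j) = Finset.Ici (max k l) := by
      ext j; simp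
    rw [this, ← Nat.cast_sum]
    congr 1
    rw [htel (max k l), hmono.monotone.map_max, hvalmax]
  -- determinant of E is 1
  have hdetE : E.det = 1 := by
    rw [Matrix.det_of_upperTriangular (M := E)
      (by intro i j hij; simp only [hE, id_eq] at hij ⊢
          rw [if_neg (not_le.mpr hij)])]
    simp [hE]
  have hdetD : D.det = ((∏ k : Fin K, g k : ℕ) : ℝ) := by
    rw [hD, Matrix.det_diagonal]
    push_cast
    rfl
  have hdet : (Xγᵀ * Xγ).det = ((∏ k : Fin K, g k : ℕ) : ℝ) := by
    rw [hfact, Matrix.det_mul, Matrix.det_mul, Matrix.det_transpose, hdetE, hdetD]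
    ring
  refine ⟨hentry, hdet, ?_⟩
  rw [Matrix.isUnit_iff_isUnit_det, hdet, isUnit_iff_ne_zero]
  have : ∏ k : Fin K, g k ≠ 0 := by
    apply Finset.prod_ne_zero_iff.mpr
    intro k _
    exact (hgpos k).ne'
  exact_mod_cast this
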